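/- Let A be a real symmetric positive definite N×N matrix and α ∈ (0,1). Then the Bochner integral (sin(πα)/π) · ∫₀^∞ μ^{−α} (μI + A)^{−1} dμ converges and equals A^{−α}, i.e. the Balakrishnan integral representation of the negative fractional power holds for symmetric positive definite matrices. -/

import Mathlib

open MeasureTheory Set Real Matrix

attribute [local instance] Matrix.normedAddCommGroup Matrix.normedSpace

lemma beta_real (α : ℝ) (hα : α ∈ Set.Ioo (0:ℝ) 1) :
    MeasureTheory.IntegrableOn (fun x : ℝ => x ^ (-α) * (1 - x) ^ (α - 1)) (Set.Ioo 0 1) ∧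
    ∫ x in Set.Ioo (0:ℝ) 1, x ^ (-α) * (1 - x) ^ (α - 1) = Real.pi / Real.sin (Real.pi * α) := by
  obtain ⟨h0, h1⟩ := hα
  -- complex beta integral
  have hu : 0 < ((1:ℂ) - (α:ℂ)).re := by simp [Complex.sub_re]; linarith
  have hv : 0 < ((α:ℂ)).re := by simpa using h0
  have hconv := Complex.betaIntegral_convergent hu hv
  have hval := Complex.Gamma_mul_Gamma_eq_betaIntegral hu hv
  have hsum : (1:ℂ) - (α:ℂ) + (α:ℂ) = 1 := by ring
  rw [hsum, Complex.Gamma_one, one_mul] at hval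
  have hgamma : Complex.Gamma (1 - (α:ℂ)) * Complex.Gamma (α:ℂ) = ((π / Real.sin (π * α) : ℝ) : ℂ) := by
    have := Complex.Gamma_mul_Gamma_one_sub (α:ℂ)
    rw [mul_comm] at this
    rw [this]
    push_cast [Complex.ofReal_sin]
    norm_num
  -- the complex integrand equals ofReal of the real one on Ioo 0 1
  have heq : ∀ x ∈ Set.Ioo (0:ℝ) 1,
      ((x:ℂ) ^ ((1:ℂ) - (α:ℂ) - 1) * (1 - (x:ℂ)) ^ ((α:ℂ) - 1)) =
        ((x ^ (-α) * (1 - x) ^ (α - 1) : ℝ) : ℂ) := by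
    intro x hx
    have hx0 : (0:ℝ) ≤ x := hx.1.le
    have hx1 : (0:ℝ) ≤ 1 - x := by linarith [hx.2]
    have e1 : ((1:ℂ) - (α:ℂ) - 1) = ((-α : ℝ) : ℂ) := by push_cast; ring
    have e2 : ((α:ℂ) - 1) = ((α - 1 : ℝ) : ℂ) := by push_cast; ring
    have e3 : (1 - (x:ℂ)) = (((1 - x : ℝ)) : ℂ) := by push_cast; ring
    rw [e1, e2, e3, ← Complex.ofReal_cpow hx0, ← Complex.ofReal_cpow hx1]
    push_cast
    ring
  have hioc : ∀ x ∈ Set.Ioc (0:ℝ) 1, True := fun _ _ => trivial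
  -- integrability
  have hconv' : IntegrableOn (fun x : ℝ => (x:ℂ) ^ ((1:ℂ) - (α:ℂ) - 1) * (1 - (x:ℂ)) ^ ((α:ℂ) - 1))
      (Set.Ioc 0 1) := by
    rw [intervalIntegrable_iff_integrableOn_Ioc_of_le (by norm_num : (0:ℝ) ≤ 1)] at hconv
    exact hconv
  have hint : IntegrableOn (fun x : ℝ => x ^ (-α) * (1 - x) ^ (α - 1)) (Set.Ioo 0 1) := by
    have := (hconv'.mono_set Set.Ioo_subset_Ioc_self).re
    refine (integrableOn_congr_fun ?_ measurableSet_Ioo).mp this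
    intro x hx
    simp only [heq x hx]
    simp [Complex.ofReal_re]
  refine ⟨hint, ?_⟩
  -- value
  have : Complex.betaIntegral (1 - (α:ℂ)) (α:ℂ) =
      ((∫ x in Set.Ioo (0:ℝ) 1, x ^ (-α) * (1 - x) ^ (α - 1) : ℝ) : ℂ) := by
    rw [Complex.betaIntegral, intervalIntegral.integral_of_le (by norm_num : (0:ℝ) ≤ 1),
      MeasureTheory.integral_Ioc_eq_integral_Ioo,
      setIntegral_congr_fun measurableSet_Ioo heq]
    exact integral_ofReal
  rw [this] at hval
  rw [hgamma] at hval
  exact_mod_cast hval.symm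

lemma cauchy_one (α : ℝ) (hα : α ∈ Set.Ioo (0:ℝ) 1) :
    MeasureTheory.IntegrableOn (fun t : ℝ => t ^ (-α) * (1 + t)⁻¹) (Set.Ioi 0) ∧
    ∫ t in Set.Ioi (0:ℝ), t ^ (-α) * (1 + t)⁻¹ = Real.pi / Real.sin (Real.pi * α) := by
  obtain ⟨h0, h1⟩ := hα
  set f : ℝ → ℝ := fun x => x / (1 - x) with hf
  set f' : ℝ → ℝ := fun x => ((1 - x) ^ 2)⁻¹ with hf'
  have hderiv : ∀ x ∈ Set.Ioo (0:ℝ) 1, HasDerivWithinAt f (f' x) (Set.Ioo 0 1) x := by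
    intro x hx
    have hne : (1 - x) ≠ 0 := by have := hx.2; intro h; linarith [hx.2, sub_eq_zero.mp h]
    have h1d : HasDerivAt (fun y : ℝ => 1 - y) (-1) x := by
      exact (hasDerivAt_id x).const_sub (1:ℝ)
    have h2d : HasDerivAt (fun y : ℝ => (1 - y)⁻¹) (-(-1) / (1 - x) ^ 2) x := h1d.inv hne
    have h3d : HasDerivAt f (1 * (1 - x)⁻¹ + x * (-(-1) / (1 - x) ^ 2)) x :=
      (hasDerivAt_id x).mul h2d
    have : 1 * (1 - x)⁻¹ + x * (-(-1) / (1 - x) ^ 2) = f' x := by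
      simp only [hf', one_mul, neg_neg]
      field_simp [hne]
      ring
    rw [this] at h3d
    exact h3d.hasDerivWithinAt
  have hinj : Set.InjOn f (Set.Ioo 0 1) := by
    intro x hx y hy h
    have hxne : (1 - x) ≠ 0 := by have := hx.2; intro hc; linarith [sub_eq_zero.mp hc]
    have hyne : (1 - y) ≠ 0 := by have := hy.2; intro hc; linarith [sub_eq_zero.mp hc]
    have : x * (1 - y) = y * (1 - x) := by
      simp only [hf] at h; rw [div_eq_div_iff hxne hyne] at h; linarith [h]
    nlinarith [this]
  have himg : f '' (Set.Ioo 0 1) = Set.Ioi (0:ℝ) := by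
    ext t
    constructor
    · rintro ⟨x, hx, rfl⟩
      exact div_pos hx.1 (by linarith [hx.2])
    · intro ht
      simp only [Set.mem_Ioi] at ht
      have h1t : (0:ℝ) < 1 + t := by linarith
      refine ⟨t / (1 + t), ⟨div_pos ht h1t, ?_⟩, ?_⟩
      · rw [div_lt_one h1t]; linarith
      · simp only [hf]
        rw [show (1:ℝ) - t / (1 + t) = 1 / (1 + t) by field_simp; ring]
        field_simp
  set g : ℝ → ℝ := fun t => t ^ (-α) * (1 + t)⁻¹ with hg
  have hcomp : ∀ x ∈ Set.Ioo (0:ℝ) 1, |f' x| • g (f x) = x ^ (-α) * (1 - x) ^ (α - 1) := by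
    intro x hx
    have hx0 : 0 < x := hx.1
    have h1x : 0 < 1 - x := by linarith [hx.2]
    have e1 : (1:ℝ) + x / (1 - x) = (1 - x)⁻¹ := by field_simp; ring
    have e2 : (x / (1 - x)) ^ (-α) = x ^ (-α) * (1 - x) ^ α := by
      rw [Real.div_rpow hx0.le h1x.le, Real.rpow_neg h1x.le, div_eq_mul_inv, inv_inv]
    have e3 : (1 - x) ^ (α - 1) = (1 - x) ^ α * (1 - x)⁻¹ := by
      rw [Real.rpow_sub h1x, Real.rpow_one, div_eq_mul_inv]
    simp only [hg, hf, hf', smul_eq_mul, e1, e2, e3]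
    rw [abs_of_pos (by positivity), inv_inv]
    field_simp
  obtain ⟨hbint, hbval⟩ := beta_real α ⟨h0, h1⟩
  have hiff := integrableOn_image_iff_integrableOn_abs_deriv_smul measurableSet_Ioo hderiv hinj g
  rw [himg] at hiff
  have hint : IntegrableOn g (Set.Ioi 0) := by
    rw [hiff]
    exact (integrableOn_congr_fun hcomp measurableSet_Ioo).mpr hbint
  refine ⟨hint, ?_⟩
  have := integral_image_eq_integral_abs_deriv_smul measurableSet_Ioo hderiv hinj g
  rw [himg] at this
  rw [hg] at this ⊢
  rw [this, setIntegral_congr_fun measurableSet_Ioo hcomp, hbval]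

lemma cauchy_lam (α : ℝ) (hα : α ∈ Set.Ioo (0:ℝ) 1) (l : ℝ) (hl : 0 < l) :
    MeasureTheory.IntegrableOn (fun t : ℝ => t ^ (-α) * (t + l)⁻¹) (Set.Ioi 0) ∧
    ∫ t in Set.Ioi (0:ℝ), t ^ (-α) * (t + l)⁻¹ =
      l ^ (-α) * (Real.pi / Real.sin (Real.pi * α)) := by
  obtain ⟨hi1, hv1⟩ := cauchy_one α hα
  set g : ℝ → ℝ := fun t => t ^ (-α) * (t + l)⁻¹ with hg
  have hcongr : ∀ x ∈ Set.Ioi (0:ℝ),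
      g (l * x) = l ^ (-α - 1) * (x ^ (-α) * (1 + x)⁻¹) := by
    intro x hx
    simp only [Set.mem_Ioi] at hx
    simp only [hg]
    rw [Real.mul_rpow hl.le hx.le]
    have : l * x + l = l * (1 + x) := by ring
    rw [this, mul_inv]
    rw [Real.rpow_sub hl, Real.rpow_one]
    ring
  have hint2 : IntegrableOn (fun x => g (l * x)) (Set.Ioi (0:ℝ)) := by
    refine (integrableOn_congr_fun hcongr measurableSet_Ioi).mpr ?_
    exact hi1.smul (l ^ (-α - 1))
  have hiff := integrableOn_Ioi_comp_mul_left_iff g (0:ℝ) hl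
  rw [mul_zero] at hiff
  have hint : IntegrableOn g (Set.Ioi 0) := hiff.mp hint2
  refine ⟨hint, ?_⟩
  have hcv := MeasureTheory.integral_comp_mul_left_Ioi g 0 hl
  rw [mul_zero] at hcv
  have h2 : ∫ x in Set.Ioi (0:ℝ), g (l * x) =
      l ^ (-α - 1) * (Real.pi / Real.sin (Real.pi * α)) := by
    rw [setIntegral_congr_fun measurableSet_Ioi hcongr]
    rw [MeasureTheory.integral_const_mul, hv1]
  rw [h2] at hcv
  have : ∫ t in Set.Ioi (0:ℝ), g t = l • (l ^ (-α - 1) * (Real.pi / Real.sin (Real.pi * α))) := by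
    rw [hcv]
    simp only [smul_eq_mul, ← mul_assoc, mul_inv_cancel₀ hl.ne', one_mul]
  rw [this, smul_eq_mul, ← mul_assoc]
  congr 1
  rw [show l * l ^ (-α - 1) = l ^ (1:ℝ) * l ^ (-α - 1) from by rw [Real.rpow_one],
    ← Real.rpow_add hl]
  norm_num

/-- Balakrishnan integral representation of the negative fractional power of a real
symmetric positive definite matrix `A = Σⱼ λⱼ ψⱼψⱼᵀ` (spectral decomposition with
orthonormal eigenvectors `ψⱼ` and eigenvalues `λⱼ > 0`): the Bochner integral
`(sin(πα)/π) ∫₀^∞ μ^{-α} (μI + A)⁻¹ dμ` converges and equals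
`A^{-α} = Σⱼ λⱼ^{-α} ψⱼψⱼᵀ`. -/
theorem matrix_balakrishnan (N : ℕ) (A : Matrix (Fin N) (Fin N) ℝ)
    (ψ : Fin N → (Fin N → ℝ)) (lam : Fin N → ℝ)
    (horth : ∀ i j, dotProduct (ψ i) (ψ j) = if i = j then 1 else 0)
    (hpos : ∀ j, 0 < lam j)
    (hA : A = ∑ j, lam j • Matrix.vecMulVec (ψ j) (ψ j))
    (α : ℝ) (hα : α ∈ Set.Ioo (0:ℝ) 1) :
    @MeasureTheory.IntegrableOn ℝ (Matrix (Fin N) (Fin N) ℝ) _ _ SeminormedAddGroup.toContinuousENorm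
      (fun μ : ℝ => μ ^ (-α) • (μ • (1 : Matrix (Fin N) (Fin N) ℝ) + A)⁻¹) (Set.Ioi 0) volume ∧
    (Real.sin (Real.pi * α) / Real.pi) •
        (∫ μ in Set.Ioi (0:ℝ), μ ^ (-α) • (μ • (1 : Matrix (Fin N) (Fin N) ℝ) + A)⁻¹) =
      ∑ j, lam j ^ (-α) • Matrix.vecMulVec (ψ j) (ψ j) := by
  set P : Fin N → Matrix (Fin N) (Fin N) ℝ := fun j => Matrix.vecMulVec (ψ j) (ψ j) with hP
  -- products of projectors
  have key1 : ∀ i j, P i * P j = if i = j then P i else 0 := by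
    intro i j
    have : P i * P j = dotProduct (ψ i) (ψ j) • Matrix.vecMulVec (ψ i) (ψ j) := by
      ext k l
      simp only [hP, Matrix.mul_apply, Matrix.vecMulVec_apply, Matrix.smul_apply,
        dotProduct, smul_eq_mul, Finset.sum_mul, Finset.mul_sum]
      apply Finset.sum_congr rfl
      intro m _
      ring
    rw [this, horth i j]
    by_cases h : i = j
    · subst h; simp [hP]
    · simp [h]
  -- resolution of identity
  have key2 : ∑ j, P j = (1 : Matrix (Fin N) (Fin N) ℝ) := by
    set B : Matrix (Fin N) (Fin N) ℝ := Matrix.of (fun i j => ψ i j) with hB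
    have hBBt : B * Bᵀ = 1 := by
      ext i j
      simpa [hB, Matrix.mul_apply, Matrix.transpose_apply, Matrix.one_apply,
        dotProduct] using horth i j
    have hBtB : Bᵀ * B = 1 := mul_eq_one_comm.mp hBBt
    calc ∑ j, P j = Bᵀ * B := by
          ext k l
          simp [hP, hB, Matrix.sum_apply, Matrix.vecMulVec_apply, Matrix.mul_apply,
            Matrix.transpose_apply]
      _ = 1 := hBtB
  -- resolvent formula
  have hres : ∀ μ : ℝ, 0 < μ →
      (μ • (1 : Matrix (Fin N) (Fin N) ℝ) + A)⁻¹ = ∑ j, (μ + lam j)⁻¹ • P j := by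
    intro μ hμ
    have hsum : μ • (1 : Matrix (Fin N) (Fin N) ℝ) + A = ∑ j, (μ + lam j) • P j := by
      rw [hA, ← key2, Finset.smul_sum, ← Finset.sum_add_distrib]
      apply Finset.sum_congr rfl
      intro j _
      rw [add_smul]
    apply Matrix.inv_eq_right_inv
    rw [hsum, Finset.sum_mul_sum]
    have : ∀ i j, ((μ + lam i) • P i) * ((μ + lam j)⁻¹ • P j) =
        if i = j then ((μ + lam i) * (μ + lam i)⁻¹) • P i else 0 := by
      intro i j
      rw [Matrix.smul_mul, Matrix.mul_smul, key1, smul_smul]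
      by_cases h : i = j
      · subst h; simp
      · simp [h]
    calc (∑ i, ∑ j, ((μ + lam i) • P i) * ((μ + lam j)⁻¹ • P j))
        = ∑ i, ∑ j, if i = j then ((μ + lam i) * (μ + lam i)⁻¹) • P i else 0 := by
          apply Finset.sum_congr rfl; intro i _
          apply Finset.sum_congr rfl; intro j _
          exact this i j
      _ = ∑ i, ((μ + lam i) * (μ + lam i)⁻¹) • P i := by
          apply Finset.sum_congr rfl; intro i _
          simp
      _ = ∑ i, P i := by
          apply Finset.sum_congr rfl; intro i _
          rw [mul_inv_cancel₀ (by have := hpos i; positivity), one_smul]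
      _ = 1 := key2
  -- rewrite integrand
  have hfun : ∀ μ ∈ Set.Ioi (0:ℝ),
      μ ^ (-α) • (μ • (1 : Matrix (Fin N) (Fin N) ℝ) + A)⁻¹ =
        ∑ j, (μ ^ (-α) * (μ + lam j)⁻¹) • P j := by
    intro μ hμ
    rw [hres μ hμ, Finset.smul_sum]
    apply Finset.sum_congr rfl
    intro j _
    rw [smul_smul]
  have hintj : ∀ j, @IntegrableOn ℝ (Matrix (Fin N) (Fin N) ℝ) _ _ SeminormedAddGroup.toContinuousENorm (fun μ : ℝ => (μ ^ (-α) * (μ + lam j)⁻¹) • P j)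
      (Set.Ioi 0) volume := fun j => ((cauchy_lam α hα (lam j) (hpos j)).1).smul_const (P j)
  have hint : @IntegrableOn ℝ (Matrix (Fin N) (Fin N) ℝ) _ _ SeminormedAddGroup.toContinuousENorm
      (fun μ : ℝ => μ ^ (-α) • (μ • (1 : Matrix (Fin N) (Fin N) ℝ) + A)⁻¹) (Set.Ioi 0) volume := by
    refine IntegrableOn.congr_fun ?_ (fun x hx => (hfun x hx).symm) measurableSet_Ioi
    exact MeasureTheory.integrable_finset_sum _ (fun j _ => hintj j)
  refine ⟨hint, ?_⟩
  rw [setIntegral_congr_fun measurableSet_Ioi hfun,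
    MeasureTheory.integral_finset_sum _ (fun j _ => hintj j)]
  have hsin : Real.sin (Real.pi * α) ≠ 0 := by
    have h1 : 0 < Real.pi * α := mul_pos Real.pi_pos hα.1
    have h2 : Real.pi * α < Real.pi := by nlinarith [Real.pi_pos, hα.2]
    exact (Real.sin_pos_of_pos_of_lt_pi h1 h2).ne'
  rw [Finset.smul_sum]
  apply Finset.sum_congr rfl
  intro j _
  rw [integral_smul_const, (cauchy_lam α hα (lam j) (hpos j)).2, smul_smul]
  congr 1
  field_simp
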